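/- Let λ₁, λ₂, λ₃ ∈ ℂ and set τ = (1−λ₂)(λ₁+λ₃) + (1+λ₂)(1+λ₁λ₃), U = (1+λ₂)(λ₁λ₃−1), V = (1−λ₂)(λ₁−λ₃), S = (1−λ₂)(λ₁+λ₃) − (1+λ₂)(1+λ₁λ₃), and T = τ·(U²−V²). Assume S ≠ 0 and T ≠ 0, let w ∈ ℂ satisfy w² = S/T, and set σ₁ = −i(U+V)w and σ₃ = −i(U−V)w. Then: if λ₁ = λ₃ then σ₁ = σ₃; if λ₁λ₃ = 1 then σ₁ = −σ₃; if λ₁λ₃ = −1 then σ₁·σ₃ = −1; and if λ₁ = −λ₃ then σ₁·σ₃ = 1. -/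

import Mathlib

/-- Special cases of the general phases colour-swap law: relations between `σ₁` and `σ₃`. -/
theorem colour_swap_special_cases (l₁ l₂ l₃ τ U V S T w σ₁ σ₃ : ℂ)
    (hτ : τ = (1 - l₂) * (l₁ + l₃) + (1 + l₂) * (1 + l₁ * l₃))
    (hU : U = (1 + l₂) * (l₁ * l₃ - 1))
    (hV : V = (1 - l₂) * (l₁ - l₃))
    (hS : S = (1 - l₂) * (l₁ + l₃) - (1 + l₂) * (1 + l₁ * l₃))
    (hT : T = τ * (U ^ 2 - V ^ 2))
    (hS0 : S ≠ 0) (hT0 : T ≠ 0)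
    (hw : w ^ 2 = S / T)
    (hσ₁ : σ₁ = -Complex.I * (U + V) * w)
    (hσ₃ : σ₃ = -Complex.I * (U - V) * w) :
    (l₁ = l₃ → σ₁ = σ₃) ∧
    (l₁ * l₃ = 1 → σ₁ = -σ₃) ∧
    (l₁ * l₃ = -1 → σ₁ * σ₃ = -1) ∧
    (l₁ = -l₃ → σ₁ * σ₃ = 1) := by
  have hτ0 : τ ≠ 0 := fun h => hT0 (by simp [hT, h])
  have hUV : U ^ 2 - V ^ 2 ≠ 0 := fun h => hT0 (by simp [hT, h])
  have hprod : σ₁ * σ₃ = -S / τ := by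
    have : σ₁ * σ₃ = -(U ^ 2 - V ^ 2) * w ^ 2 := by
      rw [hσ₁, hσ₃]
      linear_combination ((U^2 - V^2)*w^2) * Complex.I_sq
    rw [this, hw, hT]
    field_simp
  refine ⟨?_, ?_, ?_, ?_⟩
  · intro h; rw [hσ₁, hσ₃, hV, h]; ring
  · intro h; rw [hσ₁, hσ₃, hU, h]; ring
  · intro h
    have hSτ : S = τ := by rw [hS, hτ, h]; ring
    rw [hprod, hSτ, neg_div, div_self hτ0]
  · intro h
    have hSτ : S = -τ := by rw [hS, hτ, h]; ring
    rw [hprod, hSτ, neg_neg, div_self hτ0]
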